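/- In any (n, ℓ, r, t) secret sharing scheme with uniform secret, the parameters satisfy ℓ ≤ r − t. -/

import Mathlib

open Finset

/-- A probability mass function on a finite sample space. -/
structure FinPMF (Ω : Type*) [Fintype Ω] where
  p : Ω → ℝ
  nonneg : ∀ ω, 0 ≤ p ω
  sum_one : ∑ ω, p ω = 1

/-- Probability of an event. -/
noncomputable def prob {Ω : Type*} [Fintype Ω] (μ : FinPMF Ω) (E : Set Ω) : ℝ :=
  ∑ ω, E.indicator μ.p ω

/-- Shannon entropy (base `b`) of a random variable `X` on `(Ω, μ)`. -/
noncomputable def entropy {Ω A : Type*} [Fintype Ω] [Fintype A] (b : ℝ) (μ : FinPMF Ω)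
    (X : Ω → A) : ℝ :=
  -∑ a, prob μ {ω | X ω = a} * Real.logb b (prob μ {ω | X ω = a})

/-- Conditional entropy `H(X | Y) = H(X, Y) − H(Y)`. -/
noncomputable def condEntropy {Ω A B : Type*} [Fintype Ω] [Fintype A] [Fintype B] (b : ℝ)
    (μ : FinPMF Ω) (X : Ω → A) (Y : Ω → B) : ℝ :=
  entropy b μ (fun ω => (X ω, Y ω)) - entropy b μ Y

/-- Mutual information `I(X ; Y) = H(X) − H(X | Y)`. -/
noncomputable def mutualInfo {Ω A B : Type*} [Fintype Ω] [Fintype A] [Fintype B] (b : ℝ)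
    (μ : FinPMF Ω) (X : Ω → A) (Y : Ω → B) : ℝ :=
  entropy b μ X - condEntropy b μ X Y

section MyLemmas

variable {Ω A B C : Type*} [Fintype Ω] [Fintype A] [Fintype B] [Fintype C]

lemma my_prob_nonneg (μ : FinPMF Ω) (E : Set Ω) : 0 ≤ prob μ E :=
  Finset.sum_nonneg fun ω _ => Set.indicator_nonneg (fun ω _ => μ.nonneg ω) ω

lemma my_sum_prob (μ : FinPMF Ω) (Z : Ω → A) : ∑ a, prob μ {ω | Z ω = a} = 1 := by
  classical
  rw [← μ.sum_one]
  unfold prob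
  rw [Finset.sum_comm]
  refine Finset.sum_congr rfl fun ω _ => ?_
  simp only [Set.indicator_apply, Set.mem_setOf_eq]
  rw [Finset.sum_ite_eq]
  simp

lemma my_prob_empty_fiber (μ : FinPMF Ω) (Z : Ω → A) (f : A → B) (a : B)
    (ha : a ∉ Set.range f) : prob μ {ω | f (Z ω) = a} = 0 := by
  have : {ω | f (Z ω) = a} = (∅ : Set Ω) := by
    ext ω; simp only [Set.mem_setOf_eq, Set.mem_empty_iff_false, iff_false]
    exact fun h => ha ⟨Z ω, h⟩
  rw [this]
  simp [prob]

lemma my_entropy_comp (b : ℝ) (μ : FinPMF Ω) (Z : Ω → A) (f : A → B)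
    (hf : Function.Injective f) :
    entropy b μ (fun ω => f (Z ω)) = entropy b μ Z := by
  classical
  unfold entropy
  congr 1
  rw [← Finset.sum_subset (Finset.subset_univ (Finset.univ.image f))]
  · rw [Finset.sum_image (fun x _ y _ h => hf h)]
    refine Finset.sum_congr rfl fun a _ => ?_
    have : {ω | f (Z ω) = f a} = {ω | Z ω = a} := by
      ext ω; simp [hf.eq_iff]
    rw [this]
  · intro a _ ha
    have : a ∉ Set.range f := by
      intro ⟨x, hx⟩
      exact ha (Finset.mem_image.2 ⟨x, Finset.mem_univ x, hx⟩)
    rw [my_prob_empty_fiber μ Z f a this]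
    simp

lemma my_prob_fst (μ : FinPMF Ω) (Z : Ω → A) (W : Ω → B) (a : A) :
    prob μ {ω | Z ω = a} = ∑ w, prob μ {ω | (Z ω, W ω) = (a, w)} := by
  classical
  unfold prob
  rw [Finset.sum_comm]
  refine Finset.sum_congr rfl fun ω _ => ?_
  simp only [Set.indicator_apply, Set.mem_setOf_eq, Prod.mk.injEq]
  by_cases h : Z ω = a
  · simp only [h, true_and, if_true]
    rw [Finset.sum_ite_eq]
    simp
  · simp [h]

lemma my_prob_snd (μ : FinPMF Ω) (Z : Ω → A) (W : Ω → B) (w : B) :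
    prob μ {ω | W ω = w} = ∑ a, prob μ {ω | (Z ω, W ω) = (a, w)} := by
  classical
  unfold prob
  rw [Finset.sum_comm]
  refine Finset.sum_congr rfl fun ω _ => ?_
  simp only [Set.indicator_apply, Set.mem_setOf_eq, Prod.mk.injEq]
  by_cases h : W ω = w
  · simp only [h, and_true, if_true]
    rw [Finset.sum_ite_eq]
    simp
  · simp [h]

end MyLemmas

set_option linter.unusedSectionVars false

section MyLemmas2
variable {Ω A B C : Type*} [Fintype Ω] [Fintype A] [Fintype B] [Fintype C]

lemma my_entropy_le_pair (b : ℝ) (hb : 1 < b) (μ : FinPMF Ω) (Z : Ω → A) (W : Ω → B) :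
    entropy b μ Z ≤ entropy b μ (fun ω => (Z ω, W ω)) := by
  classical
  unfold entropy
  rw [neg_le_neg_iff]
  rw [Fintype.sum_prod_type]
  refine Finset.sum_le_sum fun a _ => ?_
  rw [my_prob_fst μ Z W a, Finset.sum_mul]
  refine Finset.sum_le_sum fun w _ => ?_
  set q := prob μ {ω | (Z ω, W ω) = (a, w)} with hq
  have hq0 : 0 ≤ q := my_prob_nonneg _ _
  rcases eq_or_lt_of_le hq0 with h | h
  · rw [← h]; simp
  · have hle : q ≤ ∑ w', prob μ {ω | (Z ω, W ω) = (a, w')} :=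
      Finset.single_le_sum (f := fun w' => prob μ {ω | (Z ω, W ω) = (a, w')})
        (fun w' _ => my_prob_nonneg _ _) (Finset.mem_univ w)
    have hmono := Real.logb_le_logb_of_le hb h hle
    nlinarith

end MyLemmas2

section MyLemmas3
variable {Ω A B C : Type*} [Fintype Ω] [Fintype A] [Fintype B] [Fintype C]

lemma my_chain_rule (b : ℝ) (μ : FinPMF Ω) (U : Ω → A) (V : Ω → B) (W : Ω → C) :
    condEntropy b μ (fun ω => (U ω, V ω)) W
      = condEntropy b μ U (fun ω => (V ω, W ω)) + condEntropy b μ V W := by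
  unfold condEntropy
  have h := my_entropy_comp b μ (fun ω => ((U ω, V ω), W ω))
    (fun x => (x.1.1, (x.1.2, x.2))) (fun x y h => by
      obtain ⟨⟨a, v⟩, c⟩ := x; obtain ⟨⟨a', v'⟩, c'⟩ := y
      simp only [Prod.mk.injEq] at h ⊢; exact ⟨⟨h.1, h.2.1⟩, h.2.2⟩)
  simp only at h
  rw [← h]
  ring

lemma my_uniform_entropy (b : ℝ) (hb : 1 < b) (μ : FinPMF Ω) (Z : Ω → A)
    (h : ∀ a : A, prob μ {ω | Z ω = a} = (Fintype.card A : ℝ)⁻¹) :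
    entropy b μ Z = Real.logb b (Fintype.card A) := by
  have hcard : 0 < (Fintype.card A : ℝ) := by
    have hne : Nonempty A := by
      by_contra hc
      rw [not_nonempty_iff] at hc
      have h1 := my_sum_prob μ Z
      rw [Finset.univ_eq_empty, Finset.sum_empty] at h1
      norm_num at h1
    exact_mod_cast Fintype.card_pos
  unfold entropy
  simp only [h]
  rw [Finset.sum_const, Finset.card_univ]
  rw [Real.logb_inv]
  push_cast
  field_simp
  rw [nsmul_eq_mul, mul_neg, neg_neg, mul_div_cancel₀ _ hcard.ne']

end MyLemmas3

section MyLemmas4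
variable {Ω A B : Type*} [Fintype Ω] [Fintype A] [Fintype B]

lemma my_condEntropy_le (b : ℝ) (hb : 1 < b) (μ : FinPMF Ω) (Z : Ω → A) (W : Ω → B) :
    condEntropy b μ Z W ≤ Real.logb b (Fintype.card A) := by
  classical
  set q : A × B → ℝ := fun x => prob μ {ω | (Z ω, W ω) = x} with hqdef
  set pb : B → ℝ := fun w => prob μ {ω | W ω = w} with hpdef
  have hq0 : ∀ x, 0 ≤ q x := fun x => my_prob_nonneg _ _
  have hpb0 : ∀ w, 0 ≤ pb w := fun w => my_prob_nonneg _ _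
  have hp_eq : ∀ w, pb w = ∑ a, q (a, w) := fun w => my_prob_snd μ Z W w
  have hsum : ∑ x, q x = 1 := my_sum_prob μ (fun ω => (Z ω, W ω))
  have hqp : ∀ x : A × B, q x ≤ pb x.2 := by
    intro x
    rw [hp_eq]
    exact Finset.single_le_sum (f := fun a => q (a, x.2)) (fun _ _ => hq0 _)
      (Finset.mem_univ x.1)
  have hH : condEntropy b μ Z W
      = ∑ x : A × B, q x * (Real.logb b (pb x.2) - Real.logb b (q x)) := by
    unfold condEntropy entropy
    have h2 : ∑ w, pb w * Real.logb b (pb w) = ∑ x : A × B, q x * Real.logb b (pb x.2) := by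
      rw [Fintype.sum_prod_type_right]
      refine Finset.sum_congr rfl fun w _ => ?_
      show pb w * Real.logb b (pb w) = ∑ x : A, q (x, w) * Real.logb b (pb w)
      rw [hp_eq w, Finset.sum_mul]
    simp only [mul_sub]
    rw [Finset.sum_sub_distrib, ← h2]
    ring
  set s : Finset (A × B) := Finset.univ.filter (fun x => 0 < q x) with hsdef
  have hsum_s : ∀ (f : A × B → ℝ), (∀ x, q x = 0 → f x = 0) → ∑ x ∈ s, f x = ∑ x, f x := by
    intro f hf
    refine Finset.sum_subset (Finset.filter_subset _ _) fun x _ hx => ?_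
    refine hf x ?_
    simp only [hsdef, Finset.mem_filter, Finset.mem_univ, true_and, not_lt] at hx
    exact le_antisymm hx (hq0 x)
  have hqs1 : ∑ x ∈ s, q x = 1 := by rw [hsum_s q (fun x h => h)]; exact hsum
  have hmem : ∀ x ∈ s, pb x.2 / q x ∈ Set.Ioi (0 : ℝ) := by
    intro x hx
    simp only [hsdef, Finset.mem_filter] at hx
    exact Set.mem_Ioi.2 (div_pos (lt_of_lt_of_le hx.2 (hqp x)) hx.2)
  have jensen := strictConcaveOn_log_Ioi.concaveOn.le_map_sum
    (t := s) (w := q) (p := fun x => pb x.2 / q x)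
    (fun x _ => hq0 x) hqs1 hmem
  simp only [smul_eq_mul] at jensen
  -- rewrite the LHS of the goal as a sum over s
  have hH2 : condEntropy b μ Z W = ∑ x ∈ s, q x * Real.log (pb x.2 / q x) / Real.log b := by
    rw [hH, ← hsum_s (fun x => q x * (Real.logb b (pb x.2) - Real.logb b (q x)))
      (fun x h => by simp [h])]
    refine Finset.sum_congr rfl fun x hx => ?_
    simp only [hsdef, Finset.mem_filter] at hx
    have hqx : q x ≠ 0 := ne_of_gt hx.2
    have hpx : pb x.2 ≠ 0 := ne_of_gt (lt_of_lt_of_le hx.2 (hqp x))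
    rw [← Real.logb_div hpx hqx]
    simp only [Real.logb]
    ring
  have harg : ∑ x ∈ s, q x * (pb x.2 / q x) = ∑ x ∈ s, pb x.2 := by
    refine Finset.sum_congr rfl fun x hx => ?_
    simp only [hsdef, Finset.mem_filter] at hx
    have hqx : q x ≠ 0 := ne_of_gt hx.2
    field_simp
  have hargle : ∑ x ∈ s, pb x.2 ≤ (Fintype.card A : ℝ) := by
    calc ∑ x ∈ s, pb x.2 ≤ ∑ x : A × B, pb x.2 :=
          Finset.sum_le_sum_of_subset_of_nonneg (Finset.filter_subset _ _)
            (fun x _ _ => hpb0 x.2)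
      _ = (Fintype.card A : ℝ) := by
          rw [Fintype.sum_prod_type_right]
          have hcongr : ∀ w : B, (∑ _a : A, pb w) = (Fintype.card A : ℝ) * pb w := fun w => by
            rw [Finset.sum_const, Finset.card_univ, nsmul_eq_mul]
          calc (∑ w : B, ∑ a : A, pb ((a, w) : A × B).2)
              = ∑ w : B, (Fintype.card A : ℝ) * pb w :=
                Finset.sum_congr rfl fun w _ => hcongr w
            _ = (Fintype.card A : ℝ) := by
                rw [← Finset.mul_sum, my_sum_prob μ W, mul_one]
  have hargpos : 0 < ∑ x ∈ s, pb x.2 := by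
    have hsne : s.Nonempty := by
      by_contra hc
      rw [Finset.not_nonempty_iff_eq_empty] at hc
      rw [hc, Finset.sum_empty] at hqs1
      norm_num at hqs1
    obtain ⟨x, hx⟩ := hsne
    refine Finset.sum_pos' (fun y _ => hpb0 y.2) ⟨x, hx, ?_⟩
    simp only [hsdef, Finset.mem_filter] at hx
    exact lt_of_lt_of_le hx.2 (hqp x)
  have hlogb : 0 < Real.log b := Real.log_pos hb
  rw [hH2, ← Finset.sum_div, Real.logb, div_le_div_iff_of_pos_right hlogb]
  calc ∑ x ∈ s, q x * Real.log (pb x.2 / q x)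
      ≤ Real.log (∑ x ∈ s, q x * (pb x.2 / q x)) := jensen
    _ = Real.log (∑ x ∈ s, pb x.2) := by rw [harg]
    _ ≤ Real.log (Fintype.card A) := Real.log_le_log hargpos hargle

end MyLemmas4

/-- In any `(n, ℓ, r, t)` secret sharing scheme with uniform secret,
`ℓ ≤ r − t` (stated as `ℓ + t ≤ r`). Entropies are taken with base `#𝒜`. -/
theorem secret_sharing_rate_bound
    {Ω A : Type*} [Fintype Ω] [Fintype A] (hA : 2 ≤ Fintype.card A)
    (n ℓ r t : ℕ) (hℓ : 1 ≤ ℓ) (hr : r ≤ n) (ht : t ≤ n)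
    (μ : FinPMF Ω) (S : Ω → Fin ℓ → A) (X : Ω → Fin n → A)
    (hunif : ∀ s : Fin ℓ → A, prob μ {ω | S ω = s} = (Fintype.card (Fin ℓ → A) : ℝ)⁻¹)
    (hrec : ∀ I : Finset (Fin n), r ≤ I.card →
      condEntropy (Fintype.card A) μ S (fun ω (i : { j // j ∈ I }) => X ω i.1) = 0)
    (hpriv : ∀ I : Finset (Fin n), I.card ≤ t →
      condEntropy (Fintype.card A) μ S (fun ω (i : { j // j ∈ I }) => X ω i.1)
        = entropy (Fintype.card A) μ S) :
    ℓ + t ≤ r := by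
  classical
  have hb : (1 : ℝ) < (Fintype.card A : ℝ) := by exact_mod_cast hA.trans_lt' one_lt_two
  set b : ℝ := (Fintype.card A : ℝ) with hbdef
  have hSent : entropy b μ S = (ℓ : ℝ) := by
    rw [my_uniform_entropy b hb μ S hunif, Fintype.card_fun, Fintype.card_fin]
    push_cast
    rw [Real.logb_pow, Real.logb_self_eq_one hb, mul_one]
  have htr : t ≤ r := by
    by_contra hcon
    push_neg at hcon
    obtain ⟨R, -, hRcard⟩ := Finset.exists_subset_card_eq (s := (univ : Finset (Fin n))) (n := r)
      (by simpa using hr)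
    have h0 := hrec R (le_of_eq hRcard.symm)
    have h1 := hpriv R (by rw [hRcard]; exact le_of_lt hcon)
    rw [h0, hSent] at h1
    have : (1 : ℝ) ≤ (ℓ : ℝ) := by exact_mod_cast hℓ
    linarith
  obtain ⟨R, -, hRcard⟩ := Finset.exists_subset_card_eq (s := (univ : Finset (Fin n))) (n := r)
    (by simpa using hr)
  obtain ⟨T, hTR, hTcard⟩ := Finset.exists_subset_card_eq (s := R) (n := t) (by rw [hRcard]; exact htr)
  have hDcard : (R \ T).card = r - t := by rw [Finset.card_sdiff_of_subset hTR, hRcard, hTcard]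
  -- abbreviations (plain defs so everything stays definitionally transparent)
  have key1 : condEntropy b μ S (fun ω (i : { j // j ∈ T }) => X ω i.1) = entropy b μ S :=
    hpriv T (le_of_eq hTcard)
  have key2 : condEntropy b μ S (fun ω (i : { j // j ∈ R }) => X ω i.1) = 0 :=
    hrec R (le_of_eq hRcard.symm)
  -- injective recoding from X_R to (X_D, X_T)
  have hDR : ∀ {j : Fin n}, j ∈ R \ T → j ∈ R := fun hj => (Finset.mem_sdiff.1 hj).1
  let fRT : ({ j // j ∈ R } → A) → ({ j // j ∈ R \ T } → A) × ({ j // j ∈ T } → A) :=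
    fun x => (fun i => x ⟨i.1, hDR i.2⟩, fun i => x ⟨i.1, hTR i.2⟩)
  have hfInj : Function.Injective fRT := by
    intro x y h
    funext i
    by_cases hi : i.1 ∈ T
    · have := congrArg (fun z => z.2 ⟨i.1, hi⟩) h
      simpa using this
    · have hiD : i.1 ∈ R \ T := Finset.mem_sdiff.2 ⟨i.2, hi⟩
      have := congrArg (fun z => z.1 ⟨i.1, hiD⟩) h
      simpa using this
  -- step 2 : monotonicity
  have mono : entropy b μ (fun ω => (S ω, fun i : { j // j ∈ T } => X ω i.1))
      ≤ entropy b μ (fun ω => ((S ω, fun i : { j // j ∈ R \ T } => X ω i.1),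
          fun i : { j // j ∈ T } => X ω i.1)) := by
    have h1 := my_entropy_le_pair b hb μ
      (fun ω => (S ω, fun i : { j // j ∈ T } => X ω i.1))
      (fun ω (i : { j // j ∈ R \ T }) => X ω i.1)
    have h2 : entropy b μ (fun ω => ((S ω, fun i : { j // j ∈ R \ T } => X ω i.1),
          fun i : { j // j ∈ T } => X ω i.1))
        = entropy b μ (fun ω => ((S ω, fun i : { j // j ∈ T } => X ω i.1),
          fun i : { j // j ∈ R \ T } => X ω i.1)) :=
      my_entropy_comp b μ
        (fun ω => ((S ω, fun i : { j // j ∈ T } => X ω i.1),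
          fun i : { j // j ∈ R \ T } => X ω i.1))
        (fun z => ((z.1.1, z.2), z.1.2))
        (by intro z w h
            obtain ⟨⟨a, c⟩, d⟩ := z; obtain ⟨⟨a', c'⟩, d'⟩ := w
            simp only [Prod.mk.injEq] at h ⊢
            exact ⟨⟨h.1.1, h.2⟩, h.1.2⟩)
    linarith
  -- chain rule
  have chain := my_chain_rule b μ S
    (fun ω (i : { j // j ∈ R \ T }) => X ω i.1)
    (fun ω (i : { j // j ∈ T }) => X ω i.1)
  -- recode (X_D, X_T) ↔ X_R
  have hrecode1 : entropy b μ (fun ω => ((fun i : { j // j ∈ R \ T } => X ω i.1),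
        fun i : { j // j ∈ T } => X ω i.1))
      = entropy b μ (fun ω (i : { j // j ∈ R }) => X ω i.1) :=
    my_entropy_comp b μ (fun ω (i : { j // j ∈ R }) => X ω i.1) fRT hfInj
  have hrecode2 : entropy b μ (fun ω => (S ω, ((fun i : { j // j ∈ R \ T } => X ω i.1),
        fun i : { j // j ∈ T } => X ω i.1)))
      = entropy b μ (fun ω => (S ω, fun i : { j // j ∈ R } => X ω i.1)) :=
    my_entropy_comp b μ (fun ω => (S ω, fun i : { j // j ∈ R } => X ω i.1))
      (fun z => (z.1, fRT z.2))
      (by intro z w h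
          have h1 := congrArg Prod.fst h
          have h2 := hfInj (congrArg Prod.snd h)
          exact Prod.ext h1 h2)
  have hcondeq : condEntropy b μ S
        (fun ω => ((fun i : { j // j ∈ R \ T } => X ω i.1),
          fun i : { j // j ∈ T } => X ω i.1))
      = condEntropy b μ S (fun ω (i : { j // j ∈ R }) => X ω i.1) := by
    unfold condEntropy
    rw [hrecode1, hrecode2]
  -- max entropy bound
  have hbound := my_condEntropy_le b hb μ
    (fun ω (i : { j // j ∈ R \ T }) => X ω i.1)
    (fun ω (i : { j // j ∈ T }) => X ω i.1)
  have hcardD : (Fintype.card ({ j // j ∈ R \ T } → A) : ℝ) = b ^ (r - t) := by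
    rw [Fintype.card_fun, Fintype.card_coe, hDcard]
    push_cast
    rfl
  have hlogD : Real.logb b (Fintype.card ({ j // j ∈ R \ T } → A)) = ((r - t : ℕ) : ℝ) := by
    rw [hcardD, Real.logb_pow, Real.logb_self_eq_one hb, mul_one]
  -- assemble
  have final : (ℓ : ℝ) ≤ ((r - t : ℕ) : ℝ) := by
    have e1 : (ℓ : ℝ) = condEntropy b μ S (fun ω (i : { j // j ∈ T }) => X ω i.1) := by
      rw [key1, hSent]
    have e2 : condEntropy b μ S (fun ω (i : { j // j ∈ T }) => X ω i.1)
        ≤ condEntropy b μ (fun ω => (S ω, fun i : { j // j ∈ R \ T } => X ω i.1))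
            (fun ω (i : { j // j ∈ T }) => X ω i.1) := by
      unfold condEntropy
      linarith
    calc (ℓ : ℝ) = condEntropy b μ S (fun ω (i : { j // j ∈ T }) => X ω i.1) := e1
      _ ≤ condEntropy b μ (fun ω => (S ω, fun i : { j // j ∈ R \ T } => X ω i.1))
            (fun ω (i : { j // j ∈ T }) => X ω i.1) := e2
      _ = condEntropy b μ S (fun ω => ((fun i : { j // j ∈ R \ T } => X ω i.1),
            fun i : { j // j ∈ T } => X ω i.1))
          + condEntropy b μ (fun ω (i : { j // j ∈ R \ T }) => X ω i.1)
              (fun ω (i : { j // j ∈ T }) => X ω i.1) := chain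
      _ = condEntropy b μ S (fun ω (i : { j // j ∈ R }) => X ω i.1)
          + condEntropy b μ (fun ω (i : { j // j ∈ R \ T }) => X ω i.1)
              (fun ω (i : { j // j ∈ T }) => X ω i.1) := by rw [hcondeq]
      _ = condEntropy b μ (fun ω (i : { j // j ∈ R \ T }) => X ω i.1)
              (fun ω (i : { j // j ∈ T }) => X ω i.1) := by rw [key2]; ring
      _ ≤ Real.logb b (Fintype.card ({ j // j ∈ R \ T } → A)) := hbound
      _ = ((r - t : ℕ) : ℝ) := hlogD
  have : ℓ ≤ r - t := by exact_mod_cast final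
  omega
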